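/- In the baseline sequential search model with distinct values, if the observed data reveal only the first inspected product f, the purchased product h ≠ f, and the market M (inspection statuses of all other products unknown), then optimality of the underlying search process implies: (a) z_f > z_h; (b) w_h > u_f; and (c) w_h > w_k for every product k ∈ M \ {f, h}, where z_j is the reservation value, u_j the purchase value, and w_j = min(z_j, u_j) the effective value. -/

import Mathlib

/-- An action in the baseline sequential search model over `n` products. -/
inductive SearchAction (n : ℕ) where
  | inspect (j : Fin n)
  | purchase (j : Fin n)
deriving DecidableEq

namespace SearchAction

/-- The Gittins index of an action. -/
def val {n : ℕ} (z u : Fin n → ℝ) : SearchAction n → ℝ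
  | inspect j => z j
  | purchase j => u j

/-- Availability given the list `prev` of previously selected actions. -/
def available {n : ℕ} (prev : List (SearchAction n)) : SearchAction n → Prop
  | inspect j => inspect j ∉ prev
  | purchase j => inspect j ∈ prev ∧ purchase j ∉ prev

/-- A realized optimal search process ending in the purchase of `h`:
selected actions are available, follow the Gittins index policy, all steps but
the last are inspections, and the last step purchases `h`. -/
def IsOptimalSearchEndingIn {n : ℕ} (z u : Fin n → ℝ) (h : Fin n)
    (seq : List (SearchAction n)) : Prop :=
  seq ≠ [] ∧
  (∀ t : Fin seq.length, available (seq.take t) (seq.get t)) ∧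
  (∀ t : Fin seq.length, ∀ a, available (seq.take t) a →
      val z u a ≤ val z u (seq.get t)) ∧
  (∀ t : Fin seq.length, (t : ℕ) < seq.length - 1 →
      ∃ j, seq.get t = inspect j) ∧
  seq.getLast? = some (purchase h)

end SearchAction

open SearchAction in
/-- **Scenario 3 of the incomplete-data analysis:** only the first inspected
product `f`, the purchased product `h ≠ f`, and the market are observed.  With
pairwise distinct values, optimality of the underlying search process implies
(a) `z f > z h`; (b) `w h > u f`; and (c) `w h > w k` for every other product
`k`, where `w j = min (z j) (u j)` is the effective value. -/
theorem first_inspection_and_purchase_implications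
    {n : ℕ} (z u : Fin n → ℝ) (f h : Fin n) (hfh : f ≠ h)
    (hdistinct : Function.Injective (val z u))
    (seq : List (SearchAction n))
    (hopt : IsOptimalSearchEndingIn z u h seq)
    (hfirst : seq.head? = some (SearchAction.inspect f)) :
    z h < z f ∧
    u f < min (z h) (u h) ∧
    (∀ k : Fin n, k ≠ f → k ≠ h → min (z k) (u k) < min (z h) (u h)) := by
  obtain ⟨hne, hav, hmax, hins, hlast⟩ := hopt
  have hL1 : 0 < seq.length := List.length_pos_iff.mpr hne
  -- strictness helper
  have strict : ∀ a b : SearchAction n, a ≠ b → val z u a ≤ val z u b →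
      val z u a < val z u b := fun a b hab hle =>
    lt_of_le_of_ne hle (fun e => hab (hdistinct e))
  -- element at index 0
  have get0 : seq[0] = inspect f := by
    cases seq with
    | nil => simp at hne
    | cons a l => simp_all
  -- last element
  set T : ℕ := seq.length - 1 with hT
  have hTlt : T < seq.length := Nat.sub_lt hL1 one_pos
  have getT : seq[T] = purchase h := by
    rw [List.getLast?_eq_getElem?, List.getElem?_eq_getElem hTlt] at hlast
    exact Option.some_injective _ hlast
  -- membership in take as indices
  have memtake : ∀ (a : SearchAction n) (m : ℕ), a ∈ seq.take m ↔
      ∃ i, ∃ hi : i < seq.length, i < m ∧ seq[i] = a := by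
    intro a m
    rw [List.mem_take_iff_getElem]
    constructor
    · rintro ⟨i, hi, rfl⟩
      exact ⟨i, (lt_min_iff.mp hi).2, (lt_min_iff.mp hi).1, rfl⟩
    · rintro ⟨i, hi, him, rfl⟩
      exact ⟨i, lt_min him hi, rfl⟩
  -- no purchase occurs before the last step
  have nopurch : ∀ (j : Fin n) (m : ℕ), m ≤ T → purchase j ∉ seq.take m := by
    intro j m hm hmem
    obtain ⟨i, hi, him, hgi⟩ := (memtake _ _).mp hmem
    obtain ⟨j', hj'⟩ := hins ⟨i, hi⟩ (lt_of_lt_of_le him hm)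
    simp only [List.get_eq_getElem] at hj'
    rw [hgi] at hj'
    cases hj'
  -- inspections are never repeated: if seq[i] = inspect j then j's inspection
  -- is not in take m for m ≤ i, and it IS in take m for i < m
  have insmem : ∀ (j : Fin n) (i : ℕ) (hi : i < seq.length) (m : ℕ),
      seq[i] = inspect j → i < m → inspect j ∈ seq.take m := by
    intro j i hi m hgi him
    exact (memtake _ _).mpr ⟨i, hi, him, hgi⟩
  have takemono : ∀ (a : SearchAction n) (m m' : ℕ), m ≤ m' →
      a ∈ seq.take m → a ∈ seq.take m' := by
    intro a m m' hmm hmem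
    obtain ⟨i, hi, him, hgi⟩ := (memtake _ _).mp hmem
    exact (memtake _ _).mpr ⟨i, hi, lt_of_lt_of_le him hmm, hgi⟩
  have insnotmem : ∀ (j : Fin n) (i : ℕ) (hi : i < seq.length) (m : ℕ),
      seq[i] = inspect j → m ≤ i → inspect j ∉ seq.take m := by
    intro j i hi m hgi hmi hmem
    have := hav ⟨i, hi⟩
    simp only [List.get_eq_getElem, hgi] at this
    exact this (takemono _ m i hmi hmem)
  -- availability at the last step: h was inspected at some step s < T
  have havT := hav ⟨T, hTlt⟩
  simp only [List.get_eq_getElem, getT] at havT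
  obtain ⟨hinsH, -⟩ := havT
  obtain ⟨s, hs, hsT, hgs⟩ := (memtake _ _).mp hinsH
  -- s ≥ 1
  have hs0 : 0 < s := by
    rcases Nat.eq_zero_or_pos s with h0 | h0
    · exfalso; subst h0; rw [get0] at hgs
      exact hfh (by injection hgs)
    · exact h0
  have hT1 : 1 ≤ T := hs0.trans hsT
  -- specialized max at step s (where inspect h was selected) and step T
  have maxs : ∀ a, available (seq.take s) a → val z u a ≤ z h := by
    intro a ha
    have := hmax ⟨s, hs⟩ a ha
    simpa only [List.get_eq_getElem, hgs, val] using this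
  have maxT : ∀ a, available (seq.take T) a → val z u a ≤ u h := by
    intro a ha
    have := hmax ⟨T, hTlt⟩ a ha
    simpa only [List.get_eq_getElem, getT, val] using this
  have max0 : ∀ a, available (seq.take 0) a → val z u a ≤ z f := by
    intro a ha
    have := hmax ⟨0, hL1⟩ a ha
    simpa only [List.get_eq_getElem, get0, val] using this
  -- inspect f belongs to take m for m ≥ 1
  have insF : ∀ m, 1 ≤ m → inspect f ∈ seq.take m := fun m hm =>
    insmem f 0 hL1 m get0 hm
  -- (a)
  have parta : z h < z f := by
    have havail : available (seq.take 0) (inspect h) := by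
      simp [available]
    have := max0 (inspect h) havail
    exact strict (inspect h) (inspect f)
      (fun e => hfh (SearchAction.inspect.inj e).symm) this
  -- (b)
  have hufzh : u f < z h := by
    have havail : available (seq.take s) (purchase f) :=
      ⟨insF s hs0, nopurch f s hsT.le⟩
    exact strict (purchase f) (inspect h)
      (fun e => by cases e) (maxs _ havail)
  have hufuh : u f < u h := by
    have havail : available (seq.take T) (purchase f) :=
      ⟨insF T hT1, nopurch f T le_rfl⟩
    exact strict (purchase f) (purchase h)
      (fun e => hfh (by injection e)) (maxT _ havail)
  refine ⟨parta, lt_min hufzh hufuh, ?_⟩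
  -- (c)
  intro k hkf hkh
  by_cases hk : inspect k ∈ seq.take T
  · -- k was inspected at some step sk < T
    obtain ⟨sk, hsk, hskT, hgsk⟩ := (memtake _ _).mp hk
    have hukuh : u k < u h := by
      have havail : available (seq.take T) (purchase k) :=
        ⟨hk, nopurch k T le_rfl⟩
      exact strict (purchase k) (purchase h)
        (fun e => hkh (by injection e)) (maxT _ havail)
    have hsks : sk ≠ s := by
      intro e; subst e
      have : inspect (n := n) h = inspect k := hgs.symm.trans hgsk
      exact hkh (SearchAction.inspect.inj this).symm
    rcases lt_or_gt_of_ne hsks with hlt | hgt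
    · -- k inspected before h: purchase k was available at step s
      have hukzh : u k < z h := by
        have havail : available (seq.take s) (purchase k) :=
          ⟨insmem k sk hsk s hgsk hlt, nopurch k s hsT.le⟩
        exact strict (purchase k) (inspect h)
          (fun e => by cases e) (maxs _ havail)
      exact lt_min ((min_le_right _ _).trans_lt hukzh)
        ((min_le_right _ _).trans_lt hukuh)
    · -- k inspected after h: inspect k was available at step s
      have hzkzh : z k < z h := by
        have havail : available (seq.take s) (inspect k) :=
          insnotmem k sk hsk s hgsk hgt.le
        exact strict (inspect k) (inspect h)
          (fun e => hkh (by injection e)) (maxs _ havail)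
      exact lt_min ((min_le_left _ _).trans_lt hzkzh)
        ((min_le_right _ _).trans_lt hukuh)
  · -- k was never inspected: inspect k available at both step s and step T
    have hks : inspect k ∉ seq.take s := fun hmem =>
      hk (takemono _ s T hsT.le hmem)
    have hzkzh : z k < z h := strict (inspect k) (inspect h)
      (fun e => hkh (by injection e)) (maxs _ hks)
    have hzkuh : z k < u h := strict (inspect k) (purchase h)
      (fun e => by cases e) (maxT _ hk)
    exact lt_min ((min_le_left _ _).trans_lt hzkzh)
      ((min_le_left _ _).trans_lt hzkuh)
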